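/- arXiv:1711.01669 — 3 statements merged into one kernel-verified Lean document; each statement's English description precedes it below -/
import Mathlib

section
/- Let n ≥ 3, let μ be a finite Borel measure on ℝ^n, and let x₀ ∈ ℝ^n be a point with W^μ(x₀) = +∞. Define u(x) = ∫_{ℝ^n} |x-y|^{2-n} dμ(y). Then for every T ∈ (0,∞] and every continuously differentiable curve c : [0,T) → ℝ^n satisfying |c(0) - x₀| ≥ 1/2 and inf_{t ∈ [0,T)} |c(t) - x₀| = 0, the weighted length ∫_0^T u(c(t))^{2/(n-2)} ‖c'(t)‖ dt is infinite. -/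
open MeasureTheory ENNReal

/-- The Wolff potential `W^μ(x) = ∫_0^1 (μ(B(x,r))/r^{n-2})^{2/(n-2)} dr`. -/
noncomputable def wolff (n : ℕ) (μ : Measure (EuclideanSpace ℝ (Fin n)))
    (x : EuclideanSpace ℝ (Fin n)) : ℝ≥0∞ :=
  ∫⁻ r in Set.Ioo (0:ℝ) 1,
    (μ (Metric.ball x r) / ENNReal.ofReal (r ^ (n - 2))) ^ ((2:ℝ) / ((n:ℝ) - 2))

lemma myRpowAnti {x y : ℝ≥0∞} {z : ℝ} (hz : z ≤ 0) (hxy : x ≤ y) : y ^ z ≤ x ^ z := by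
  have hx' : x ^ z = (x ^ (-z))⁻¹ := by rw [← ENNReal.rpow_neg, neg_neg]
  have hy' : y ^ z = (y ^ (-z))⁻¹ := by rw [← ENNReal.rpow_neg, neg_neg]
  rw [hx', hy']
  exact ENNReal.inv_le_inv.2 (ENNReal.rpow_le_rpow hxy (neg_nonneg.2 hz))

lemma myLenBound {E : Type*} [NormedAddCommGroup E] [NormedSpace ℝ E] [CompleteSpace E]
    {c c' : ℝ → E} {a b : ℝ} (hab : a ≤ b)
    (hd : ∀ t ∈ Set.Icc a b, HasDerivWithinAt c (c' t) (Set.Icc a b) t)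
    (hc : ContinuousOn c' (Set.Icc a b)) :
    ENNReal.ofReal ‖c b - c a‖ ≤ ∫⁻ t in Set.Ioc a b, ENNReal.ofReal ‖c' t‖ := by
  have hcont : ContinuousOn c (Set.Icc a b) := fun t ht => (hd t ht).continuousWithinAt
  have hint : IntervalIntegrable c' volume a b := by
    apply ContinuousOn.intervalIntegrable
    rwa [Set.uIcc_of_le hab]
  have hftc : ∫ t in a..b, c' t = c b - c a := by
    apply intervalIntegral.integral_eq_sub_of_hasDeriv_right_of_le hab hcont _ hint
    intro x hx
    exact (hd x (Set.mem_Icc_of_Ioo hx)).mono_of_mem_nhdsWithin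
      (Icc_mem_nhdsGT_of_mem ⟨le_of_lt hx.1, hx.2⟩)
  have h1 : ‖c b - c a‖ ≤ ∫ t in a..b, ‖c' t‖ := by
    rw [← hftc]; exact intervalIntegral.norm_integral_le_integral_norm hab
  have hIoc : IntegrableOn (fun t => ‖c' t‖) (Set.Ioc a b) volume := by
    have : IntegrableOn (fun t => ‖c' t‖) (Set.Icc a b) volume :=
      (hc.norm).integrableOn_compact isCompact_Icc
    exact this.mono_set Set.Ioc_subset_Icc_self
  have h2 : ∫ t in a..b, ‖c' t‖ = ∫ t in Set.Ioc a b, ‖c' t‖ := intervalIntegral.integral_of_le hab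
  calc ENNReal.ofReal ‖c b - c a‖ ≤ ENNReal.ofReal (∫ t in Set.Ioc a b, ‖c' t‖) :=
        ENNReal.ofReal_le_ofReal (h2 ▸ h1)
    _ = ∫⁻ t in Set.Ioc a b, ENNReal.ofReal ‖c' t‖ :=
        ofReal_integral_eq_lintegral_ofReal hIoc (ae_of_all _ fun t => norm_nonneg _)

/-- Let `n ≥ 3`, `μ` a finite Borel measure on `ℝⁿ`, and `x₀` a point with `W^μ(x₀) = ∞`.
Let `u(x) = ∫ |x-y|^{2-n} dμ(y)`. Then for every `T ∈ (0,∞]` and every continuously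
differentiable curve `c : [0,T) → ℝⁿ` with `|c(0) - x₀| ≥ 1/2` and
`inf_{t ∈ [0,T)} |c(t) - x₀| = 0`, the weighted length
`∫_0^T u(c(t))^{2/(n-2)} ‖c'(t)‖ dt` is infinite. -/
theorem stmt6 (n : ℕ) (hn : 3 ≤ n) (μ : Measure (EuclideanSpace ℝ (Fin n)))
    [IsFiniteMeasure μ] (x₀ : EuclideanSpace ℝ (Fin n))
    (hW : wolff n μ x₀ = ⊤)
    (T : ℝ≥0∞) (hT : 0 < T)
    (S : Set ℝ) (hS : S = {t : ℝ | 0 ≤ t ∧ ENNReal.ofReal t < T})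
    (c c' : ℝ → EuclideanSpace ℝ (Fin n))
    (hderiv : ∀ t ∈ S, HasDerivWithinAt c (c' t) S t)
    (hcont : ContinuousOn c' S)
    (hstart : 1/2 ≤ ‖c 0 - x₀‖)
    (happroach : sInf ((fun t => ‖c t - x₀‖) '' S) = 0) :
    (∫⁻ t in S,
        (∫⁻ y, (ENNReal.ofReal ‖c t - y‖) ^ ((2:ℝ) - (n:ℝ)) ∂μ) ^ ((2:ℝ) / ((n:ℝ) - 2))
          * ENNReal.ofReal ‖c' t‖) = ⊤ := by
  have hn2 : (2:ℕ) ≤ n := by omega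
  have hnR : (3:ℝ) ≤ (n:ℝ) := by exact_mod_cast hn
  have hn2R : (0:ℝ) < (n:ℝ) - 2 := by linarith
  set p : ℝ := (2:ℝ) / ((n:ℝ) - 2) with hp_def
  have hp_pos : 0 < p := by positivity
  have hcast : ((n - 2 : ℕ) : ℝ) = (n:ℝ) - 2 := by
    rw [Nat.cast_sub hn2]; norm_num
  set q : ℕ → ℝ := fun k => (2:ℝ)⁻¹ ^ k with hq_def
  have hq_pos : ∀ k, 0 < q k := fun k => pow_pos (by norm_num) k
  have hq_succ : ∀ k, q (k+1) = q k / 2 := by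
    intro k; simp only [hq_def, pow_succ]; ring
  have hq_anti : ∀ j k, j ≤ k → q k ≤ q j := fun j k h =>
    pow_le_pow_of_le_one (by norm_num) (by norm_num) h
  have hq_half : ∀ k, q (k+1) ≤ 1/2 := by
    intro k
    have := hq_anti 1 (k+1) (by omega)
    simpa [hq_def] using this
  set f : ℝ → ℝ := fun t => ‖c t - x₀‖ with hf_def
  -- basic facts about S
  have hS0 : (0:ℝ) ∈ S := by rw [hS]; exact ⟨le_refl 0, by simpa using hT⟩
  have hS_nonneg : ∀ t ∈ S, 0 ≤ t := by intro t ht; rw [hS] at ht; exact ht.1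
  have hS_seg : ∀ t ∈ S, Set.Icc 0 t ⊆ S := by
    intro t ht s hs
    rw [hS] at ht ⊢
    exact ⟨hs.1, lt_of_le_of_lt (ENNReal.ofReal_le_ofReal hs.2) ht.2⟩
  have hfc : ∀ t ∈ S, ContinuousWithinAt f S t := fun t ht =>
    ((hderiv t ht).continuousWithinAt.sub continuousWithinAt_const).norm
  have hlim : ∀ {t : ℝ}, t ∈ S → ∀ {u : ℕ → ℝ}, (∀ j, u j ∈ S) →
      Filter.Tendsto u Filter.atTop (nhds t) →
      Filter.Tendsto (fun j => f (u j)) Filter.atTop (nhds (f t)) := by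
    intro t ht u hu hut
    have h1 : Filter.Tendsto u Filter.atTop (nhdsWithin t S) :=
      tendsto_nhdsWithin_iff.2 ⟨hut, Filter.Eventually.of_forall hu⟩
    exact ((hfc t ht).tendsto).comp h1
  have happrox : ∀ ε : ℝ, 0 < ε → ∃ t ∈ S, f t < ε := by
    intro ε hε
    have hne : ((fun t => ‖c t - x₀‖) '' S).Nonempty := ⟨_, Set.mem_image_of_mem _ hS0⟩
    have hbdd : BddBelow ((fun t => ‖c t - x₀‖) '' S) := ⟨0, fun x hx => by
      obtain ⟨t, _, rfl⟩ := hx; exact norm_nonneg _⟩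
    have hlt : sInf ((fun t => ‖c t - x₀‖) '' S) < ε := by rw [happroach]; exact hε
    obtain ⟨x, hx, hxε⟩ := (csInf_lt_iff hbdd hne).1 hlt
    obtain ⟨t, htS, rfl⟩ := hx
    exact ⟨t, htS, hxε⟩
  -- the sets B and the first hitting times b
  set B : ℕ → Set ℝ := fun k => {s | s ∈ S ∧ f s ≤ q (k+2)} with hB_def
  set b : ℕ → ℝ := fun k => sInf (B k) with hb_def
  have hB_ne : ∀ k, (B k).Nonempty := by
    intro k; obtain ⟨t, htS, htf⟩ := happrox (q (k+2)) (hq_pos _)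
    exact ⟨t, htS, le_of_lt htf⟩
  have hB_bdd : ∀ k, BddBelow (B k) := fun k => ⟨0, fun s hs => hS_nonneg s hs.1⟩
  have hb_nonneg : ∀ k, 0 ≤ b k := fun k => le_csInf (hB_ne k) (fun s hs => hS_nonneg s hs.1)
  have hb_mem_S : ∀ k, b k ∈ S := by
    intro k
    obtain ⟨s, hsS, hsf⟩ := hB_ne k
    have hbs : b k ≤ s := csInf_le (hB_bdd k) ⟨hsS, hsf⟩
    rw [hS]
    refine ⟨hb_nonneg k, ?_⟩
    have h2 : ENNReal.ofReal s < T := by rw [hS] at hsS; exact hsS.2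
    exact lt_of_le_of_lt (ENNReal.ofReal_le_ofReal hbs) h2
  have hb_lt : ∀ k s, s ∈ S → f s ≤ q (k+2) → b k ≤ s := fun k s h1 h2 =>
    csInf_le (hB_bdd k) ⟨h1, h2⟩
  have hfb_le : ∀ k, f (b k) ≤ q (k+2) := by
    intro k
    obtain ⟨u, _, hu_tend, hu_mem⟩ := exists_seq_tendsto_sInf (hB_ne k) (hB_bdd k)
    exact le_of_tendsto (hlim (hb_mem_S k) (fun j => (hu_mem j).1) hu_tend)
      (Filter.Eventually.of_forall fun j => (hu_mem j).2)
  have hfb_gt : ∀ k s, s ∈ S → s < b k → q (k+2) < f s := by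
    intro k s hsS hsb
    by_contra h
    push_neg at h
    exact absurd (hb_lt k s hsS h) (not_le.2 hsb)
  have hq_lt_half : ∀ k, q (k+2) < 1/2 := by
    intro k
    have h1 := hq_anti 2 (k+2) (by omega)
    have h2 : q 2 = 1/4 := by norm_num [hq_def]
    rw [h2] at h1
    linarith
  have hb_pos : ∀ k, 0 < b k := by
    intro k
    rcases eq_or_lt_of_le (hb_nonneg k) with h | h
    · exfalso
      have h0 : f (b k) ≤ q (k+2) := hfb_le k
      rw [← h] at h0
      have hf0 : (1:ℝ)/2 ≤ f 0 := hstart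
      have := hq_lt_half k
      linarith
    · exact h
  have hfb_ge : ∀ k, q (k+2) ≤ f (b k) := by
    intro k
    have h1 : Set.Ico 0 (b k) ⊆ S := fun s hs => hS_seg _ (hb_mem_S k) ⟨hs.1, le_of_lt hs.2⟩
    have h2 : Filter.Tendsto f (nhdsWithin (b k) (Set.Ico 0 (b k))) (nhds (f (b k))) :=
      ((hfc _ (hb_mem_S k)).tendsto).mono_left (nhdsWithin_mono _ h1)
    have h3 : (nhdsWithin (b k) (Set.Ico 0 (b k))).NeBot := by
      rw [nhdsWithin_Ico_eq_nhdsLT (hb_pos k)]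
      infer_instance
    apply ge_of_tendsto h2
    filter_upwards [self_mem_nhdsWithin] with s hs
    exact le_of_lt (hfb_gt k s (h1 hs) hs.2)
  have hb_mono : ∀ k, b k ≤ b (k+1) := by
    intro k
    apply le_csInf (hB_ne (k+1))
    intro s hs
    exact hb_lt k s hs.1 (le_trans hs.2 (hq_anti (k+2) (k+3) (by omega)))
  -- the last exit times a
  set A : ℕ → Set ℝ := fun k => {s | s ∈ S ∧ s ≤ b k ∧ q (k+1) ≤ f s} with hA_def
  set a : ℕ → ℝ := fun k => sSup (A k) with ha_def
  have hA_zero : ∀ k, (0:ℝ) ∈ A k := fun k =>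
    ⟨hS0, hb_nonneg k, le_trans (hq_half k) hstart⟩
  have hA_ne : ∀ k, (A k).Nonempty := fun k => ⟨0, hA_zero k⟩
  have hA_bdd : ∀ k, BddAbove (A k) := fun k => ⟨b k, fun s hs => hs.2.1⟩
  have ha_le_b : ∀ k, a k ≤ b k := fun k => csSup_le (hA_ne k) (fun s hs => hs.2.1)
  have ha_nonneg : ∀ k, 0 ≤ a k := fun k => le_csSup (hA_bdd k) (hA_zero k)
  have ha_mem_S : ∀ k, a k ∈ S := fun k => hS_seg _ (hb_mem_S k) ⟨ha_nonneg k, ha_le_b k⟩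
  have hfa_ge : ∀ k, q (k+1) ≤ f (a k) := by
    intro k
    obtain ⟨u, _, hu_tend, hu_mem⟩ := exists_seq_tendsto_sSup (hA_ne k) (hA_bdd k)
    exact ge_of_tendsto (hlim (ha_mem_S k) (fun j => (hu_mem j).1) hu_tend)
      (Filter.Eventually.of_forall fun j => (hu_mem j).2.2)
  have hq_strict : ∀ k, q (k+2) < q (k+1) := by
    intro k
    rw [hq_succ (k+1)]
    have := hq_pos (k+1)
    linarith
  have ha_lt_b : ∀ k, a k < b k := by
    intro k
    rcases eq_or_lt_of_le (ha_le_b k) with h | h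
    · exfalso
      have h1 := hfa_ge k
      rw [h] at h1
      have h2 := hfb_le k
      have h3 := hq_strict k
      linarith
    · exact h
  have hf_on : ∀ k s, a k < s → s ≤ b k → f s < q (k+1) := by
    intro k s h1 h2
    by_contra h
    push_neg at h
    have hsS : s ∈ S := hS_seg _ (hb_mem_S k) ⟨le_trans (ha_nonneg k) (le_of_lt h1), h2⟩
    have : s ≤ a k := le_csSup (hA_bdd k) ⟨hsS, h2, h⟩
    linarith
  have hf_Icc : ∀ k, ∀ s ∈ Set.Icc (a k) (b k), f s ≤ q (k+1) := by
    intro k s hs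
    rcases eq_or_lt_of_le hs.1 with h | h
    · rw [← h]
      have hsub : Set.Ioc (a k) (b k) ⊆ S := fun z hz =>
        hS_seg _ (hb_mem_S k) ⟨le_trans (ha_nonneg k) (le_of_lt hz.1), hz.2⟩
      have h2 : Filter.Tendsto f (nhdsWithin (a k) (Set.Ioc (a k) (b k))) (nhds (f (a k))) :=
        ((hfc _ (ha_mem_S k)).tendsto).mono_left (nhdsWithin_mono _ hsub)
      have h3 : (nhdsWithin (a k) (Set.Ioc (a k) (b k))).NeBot := by
        rw [nhdsWithin_Ioc_eq_nhdsGT (ha_lt_b k)]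
        infer_instance
      apply le_of_tendsto h2
      filter_upwards [self_mem_nhdsWithin] with z hz
      exact le_of_lt (hf_on k z hz.1 hz.2)
    · exact le_of_lt (hf_on k s h hs.2)
  have hb_le_a : ∀ k, b k ≤ a (k+1) := by
    intro k
    apply le_csSup (hA_bdd (k+1))
    exact ⟨hb_mem_S k, hb_mono k, hfb_ge k⟩
  have hchain : ∀ j k, j < k → b j ≤ a k := by
    intro j k hjk
    induction k with
    | zero => omega
    | succ m ih =>
      rcases Nat.lt_succ_iff_lt_or_eq.1 hjk with h | h
      · exact le_trans (ih h) (le_trans (ha_le_b m) (hb_le_a m))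
      · subst h; exact hb_le_a j
  have hdisj : Pairwise (Function.onFun Disjoint (fun k => Set.Ioc (a k) (b k))) := by
    intro j k hjk
    rcases lt_or_gt_of_ne hjk with h | h
    · exact Set.Ioc_disjoint_Ioc.2 (le_trans (min_le_left _ _)
        (le_trans (hchain j k h) (le_max_right _ _)))
    · exact Set.Ioc_disjoint_Ioc.2 (le_trans (min_le_right _ _)
        (le_trans (hchain k j h) (le_max_left _ _)))
  -- lower bound for the potential on each crossing interval
  have hexp_nonpos : (2:ℝ) - (n:ℝ) ≤ 0 := by linarith
  have hq2k : ∀ k, q (k+1) + q (k+1) = q k := by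
    intro k
    rw [hq_succ k]
    ring
  have hKey : ∀ k, ∀ t ∈ Set.Icc (a k) (b k),
      ENNReal.ofReal ((q k) ^ (-2:ℝ)) * (μ (Metric.ball x₀ (q (k+1)))) ^ p ≤
      (∫⁻ y, (ENNReal.ofReal ‖c t - y‖) ^ ((2:ℝ) - (n:ℝ)) ∂μ) ^ p := by
    intro k t ht
    have hball : ∀ y ∈ Metric.ball x₀ (q (k+1)),
        (ENNReal.ofReal (q k)) ^ ((2:ℝ) - (n:ℝ)) ≤
          (ENNReal.ofReal ‖c t - y‖) ^ ((2:ℝ) - (n:ℝ)) := by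
      intro y hy
      apply myRpowAnti hexp_nonpos
      apply ENNReal.ofReal_le_ofReal
      have h1 : ‖c t - y‖ ≤ ‖c t - x₀‖ + ‖x₀ - y‖ := by
        have := dist_triangle (c t) x₀ y
        simpa [dist_eq_norm] using this
      have h2 : ‖c t - x₀‖ ≤ q (k+1) := hf_Icc k t ht
      have h3 : ‖x₀ - y‖ ≤ q (k+1) := by
        rw [Metric.mem_ball] at hy
        rw [norm_sub_rev]
        calc ‖y - x₀‖ = dist y x₀ := by rw [dist_eq_norm]
        _ ≤ q (k+1) := le_of_lt hy
      have h4 := hq2k k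
      linarith
    have hlow : (ENNReal.ofReal (q k)) ^ ((2:ℝ)-(n:ℝ)) * μ (Metric.ball x₀ (q (k+1))) ≤
        ∫⁻ y, (ENNReal.ofReal ‖c t - y‖) ^ ((2:ℝ) - (n:ℝ)) ∂μ := by
      calc (ENNReal.ofReal (q k)) ^ ((2:ℝ)-(n:ℝ)) * μ (Metric.ball x₀ (q (k+1)))
          = ∫⁻ _ in Metric.ball x₀ (q (k+1)),
              (ENNReal.ofReal (q k)) ^ ((2:ℝ)-(n:ℝ)) ∂μ := (setLIntegral_const _ _).symm
        _ ≤ ∫⁻ y in Metric.ball x₀ (q (k+1)),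
              (ENNReal.ofReal ‖c t - y‖) ^ ((2:ℝ)-(n:ℝ)) ∂μ :=
            setLIntegral_mono' measurableSet_ball hball
        _ ≤ _ := setLIntegral_le_lintegral _ _
    have hfinal := ENNReal.rpow_le_rpow hlow (le_of_lt hp_pos)
    rw [ENNReal.mul_rpow_of_nonneg _ _ (le_of_lt hp_pos)] at hfinal
    have heq : ((ENNReal.ofReal (q k)) ^ ((2:ℝ)-(n:ℝ))) ^ p = ENNReal.ofReal ((q k) ^ (-2:ℝ)) := by
      rw [← ENNReal.rpow_mul]
      have hme : ((2:ℝ) - (n:ℝ)) * p = -2 := by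
        rw [hp_def]
        field_simp
        ring
      rw [hme, ← ENNReal.ofReal_rpow_of_pos (hq_pos k)]
    rwa [heq] at hfinal
  -- the per-interval estimate
  have hIk : ∀ k, ENNReal.ofReal ((q k) ^ (-2:ℝ) * q (k+2)) * (μ (Metric.ball x₀ (q (k+1)))) ^ p ≤
      ∫⁻ t in Set.Ioc (a k) (b k),
        (∫⁻ y, (ENNReal.ofReal ‖c t - y‖) ^ ((2:ℝ) - (n:ℝ)) ∂μ) ^ p
          * ENNReal.ofReal ‖c' t‖ := by
    intro k
    set K : ℝ≥0∞ := ENNReal.ofReal ((q k) ^ (-2:ℝ)) * (μ (Metric.ball x₀ (q (k+1)))) ^ p with hK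
    have hKne : K ≠ ⊤ := ENNReal.mul_ne_top ENNReal.ofReal_ne_top
      (ENNReal.rpow_ne_top_of_nonneg (le_of_lt hp_pos) (measure_ne_top μ _))
    have step1 : (∫⁻ t in Set.Ioc (a k) (b k), K * ENNReal.ofReal ‖c' t‖) ≤
        ∫⁻ t in Set.Ioc (a k) (b k),
          (∫⁻ y, (ENNReal.ofReal ‖c t - y‖) ^ ((2:ℝ) - (n:ℝ)) ∂μ) ^ p
            * ENNReal.ofReal ‖c' t‖ :=
      setLIntegral_mono' measurableSet_Ioc (fun t ht =>
        mul_le_mul_left (hKey k t (Set.Ioc_subset_Icc_self ht)) _)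
    have step2 : (∫⁻ t in Set.Ioc (a k) (b k), K * ENNReal.ofReal ‖c' t‖) =
        K * ∫⁻ t in Set.Ioc (a k) (b k), ENNReal.ofReal ‖c' t‖ :=
      lintegral_const_mul' K _ hKne
    have hIccS : Set.Icc (a k) (b k) ⊆ S := fun s hs =>
      hS_seg _ (hb_mem_S k) ⟨le_trans (ha_nonneg k) hs.1, hs.2⟩
    have step3 : ENNReal.ofReal ‖c (b k) - c (a k)‖ ≤
        ∫⁻ t in Set.Ioc (a k) (b k), ENNReal.ofReal ‖c' t‖ :=
      myLenBound (le_of_lt (ha_lt_b k))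
        (fun t htt => (hderiv t (hIccS htt)).mono hIccS) (hcont.mono hIccS)
    have step4 : q (k+2) ≤ ‖c (b k) - c (a k)‖ := by
      have h1 : f (a k) - f (b k) ≤ ‖c (b k) - c (a k)‖ := by
        have h0 := norm_sub_norm_le (c (a k) - x₀) (c (b k) - x₀)
        have he : (c (a k) - x₀) - (c (b k) - x₀) = c (a k) - c (b k) := by abel
        rw [he, norm_sub_rev (c (a k)) (c (b k))] at h0
        exact h0
      have h2 := hfa_ge k
      have h3 := hfb_le k
      have h4 : q (k+1) - q (k+2) = q (k+2) := by
        rw [hq_succ (k+1)]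
        ring
      linarith
    have step0 : ENNReal.ofReal ((q k) ^ (-2:ℝ) * q (k+2))
        * (μ (Metric.ball x₀ (q (k+1)))) ^ p = K * ENNReal.ofReal (q (k+2)) := by
      rw [hK, ENNReal.ofReal_mul (Real.rpow_nonneg (le_of_lt (hq_pos k)) _)]
      ring
    calc ENNReal.ofReal ((q k) ^ (-2:ℝ) * q (k+2)) * (μ (Metric.ball x₀ (q (k+1)))) ^ p
        = K * ENNReal.ofReal (q (k+2)) := step0
      _ ≤ K * ∫⁻ t in Set.Ioc (a k) (b k), ENNReal.ofReal ‖c' t‖ :=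
          mul_le_mul_right (le_trans (ENNReal.ofReal_le_ofReal step4) step3) K
      _ = ∫⁻ t in Set.Ioc (a k) (b k), K * ENNReal.ofReal ‖c' t‖ := step2.symm
      _ ≤ _ := step1
  -- the dyadic series G
  set G : ℕ → ℝ≥0∞ := fun j =>
    ENNReal.ofReal ((q j)⁻¹) * (μ (Metric.ball x₀ (q j))) ^ p with hG_def
  have hqdiff : ∀ j, q j - q (j+1) = q (j+1) := by
    intro j; rw [hq_succ j]; ring
  -- covering (0,1) by dyadic intervals
  have hcover : Set.Ioo (0:ℝ) 1 ⊆ ⋃ j, Set.Ioc (q (j+1)) (q j) := by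
    intro r hr
    have hex : ∃ m, q m < r := by
      obtain ⟨m, hm⟩ := exists_pow_lt_of_lt_one hr.1 (by norm_num : (2:ℝ)⁻¹ < 1)
      exact ⟨m, hm⟩
    have hm : q (Nat.find hex) < r := Nat.find_spec hex
    have hm0 : Nat.find hex ≠ 0 := by
      intro h0
      have hq0 : q 0 = 1 := by norm_num [hq_def]
      rw [h0, hq0] at hm
      exact absurd hr.2 (not_lt.2 (le_of_lt hm))
    obtain ⟨j, hj⟩ := Nat.exists_eq_succ_of_ne_zero hm0
    refine Set.mem_iUnion.2 ⟨j, ?_, ?_⟩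
    · rw [← Nat.succ_eq_add_one, ← hj]; exact hm
    · have hjm : j < Nat.find hex := by omega
      have := Nat.find_min hex hjm
      push_neg at this
      exact this
  -- per-interval bound for the Wolff integral
  have hwj : ∀ j, (∫⁻ r in Set.Ioc (q (j+1)) (q j),
      (μ (Metric.ball x₀ r) / ENNReal.ofReal (r ^ (n - 2))) ^ p) ≤ ENNReal.ofReal 2 * G j := by
    intro j
    set C : ℝ≥0∞ :=
      (μ (Metric.ball x₀ (q j)) / ENNReal.ofReal ((q (j+1)) ^ (n-2))) ^ p with hC_def
    have hbound : ∀ r ∈ Set.Ioc (q (j+1)) (q j),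
        (μ (Metric.ball x₀ r) / ENNReal.ofReal (r ^ (n - 2))) ^ p ≤ C := by
      intro r hr
      apply ENNReal.rpow_le_rpow _ (le_of_lt hp_pos)
      apply ENNReal.div_le_div
      · exact measure_mono (Metric.ball_subset_ball hr.2)
      · exact ENNReal.ofReal_le_ofReal
          (pow_le_pow_left₀ (le_of_lt (hq_pos (j+1))) (le_of_lt hr.1) _)
    have hint_le : (∫⁻ r in Set.Ioc (q (j+1)) (q j),
        (μ (Metric.ball x₀ r) / ENNReal.ofReal (r ^ (n - 2))) ^ p) ≤
        C * ENNReal.ofReal (q (j+1)) := by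
      calc (∫⁻ r in Set.Ioc (q (j+1)) (q j),
            (μ (Metric.ball x₀ r) / ENNReal.ofReal (r ^ (n - 2))) ^ p)
          ≤ ∫⁻ _ in Set.Ioc (q (j+1)) (q j), C := setLIntegral_mono' measurableSet_Ioc hbound
        _ = C * volume (Set.Ioc (q (j+1)) (q j)) := setLIntegral_const _ _
        _ = C * ENNReal.ofReal (q (j+1)) := by rw [Real.volume_Ioc, hqdiff j]
    refine le_trans hint_le (le_of_eq ?_)
    -- simplify the constant
    have hDen : (ENNReal.ofReal ((q (j+1)) ^ (n-2))) ^ p =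
        ENNReal.ofReal ((q (j+1)) ^ (2:ℝ)) := by
      have e1 : ENNReal.ofReal (q (j+1) ^ (n-2)) =
          ENNReal.ofReal (q (j+1)) ^ (((n-2:ℕ)):ℝ) := by
        rw [← Real.rpow_natCast (q (j+1)) (n-2)]
        exact (ENNReal.ofReal_rpow_of_pos (hq_pos (j+1))).symm
      rw [e1, ← ENNReal.rpow_mul]
      have e2 : ((n-2:ℕ):ℝ) * p = 2 := by
        rw [hcast, hp_def]
        field_simp
      rw [e2]
      exact ENNReal.ofReal_rpow_of_pos (hq_pos (j+1))
    have hs2 : ((q (j+1)) ^ (2:ℝ))⁻¹ * q (j+1) = 2 * (q j)⁻¹ := by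
      have hs1 : (q (j+1)) ^ (2:ℝ) = (q (j+1))^(2:ℕ) := by
        rw [← Real.rpow_natCast (q (j+1)) 2]; norm_num
      rw [hs1, hq_succ j]
      have hne := (hq_pos j).ne'
      field_simp
    have hkey : ENNReal.ofReal (((q (j+1)) ^ (2:ℝ))⁻¹) * ENNReal.ofReal (q (j+1)) =
        ENNReal.ofReal 2 * ENNReal.ofReal ((q j)⁻¹) := by
      rw [← ENNReal.ofReal_mul (inv_nonneg.2 (Real.rpow_nonneg (le_of_lt (hq_pos (j+1))) _)),
        hs2, ENNReal.ofReal_mul (by norm_num : (0:ℝ) ≤ 2)]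
    calc C * ENNReal.ofReal (q (j+1))
        = (μ (Metric.ball x₀ (q j))) ^ p / (ENNReal.ofReal ((q (j+1)) ^ (n-2))) ^ p
            * ENNReal.ofReal (q (j+1)) := by
          rw [hC_def, ENNReal.div_rpow_of_nonneg _ _ (le_of_lt hp_pos)]
      _ = (μ (Metric.ball x₀ (q j))) ^ p *
            (ENNReal.ofReal (((q (j+1)) ^ (2:ℝ))⁻¹) * ENNReal.ofReal (q (j+1))) := by
          rw [hDen, div_eq_mul_inv, ← ENNReal.ofReal_inv_of_pos
            (Real.rpow_pos_of_pos (hq_pos (j+1)) _), mul_assoc]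
      _ = ENNReal.ofReal 2 * G j := by
          rw [hkey, hG_def]
          ring
  -- the series diverges
  have hwolff : wolff n μ x₀ = ∫⁻ r in Set.Ioo (0:ℝ) 1,
      (μ (Metric.ball x₀ r) / ENNReal.ofReal (r ^ (n - 2))) ^ p := rfl
  have hsum_top : (⊤:ℝ≥0∞) ≤ ENNReal.ofReal 2 * ∑' j, G j := by
    rw [← hW, hwolff, ← ENNReal.tsum_mul_left]
    calc (∫⁻ r in Set.Ioo (0:ℝ) 1, (μ (Metric.ball x₀ r) / ENNReal.ofReal (r ^ (n - 2))) ^ p)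
        ≤ ∫⁻ r in ⋃ j, Set.Ioc (q (j+1)) (q j),
            (μ (Metric.ball x₀ r) / ENNReal.ofReal (r ^ (n - 2))) ^ p :=
          lintegral_mono_set hcover
      _ ≤ ∑' j, ∫⁻ r in Set.Ioc (q (j+1)) (q j),
            (μ (Metric.ball x₀ r) / ENNReal.ofReal (r ^ (n - 2))) ^ p :=
          lintegral_iUnion_le _ _
      _ ≤ ∑' j, ENNReal.ofReal 2 * G j := ENNReal.tsum_le_tsum hwj
  have hG_sum : ∑' j, G j = ⊤ := by
    by_contra hfin
    have h1 : ENNReal.ofReal 2 * ∑' j, G j ≠ ⊤ :=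
      ENNReal.mul_ne_top ENNReal.ofReal_ne_top hfin
    exact h1 (top_le_iff.1 hsum_top)
  have hG0 : G 0 ≠ ⊤ := ENNReal.mul_ne_top ENNReal.ofReal_ne_top
    (ENNReal.rpow_ne_top_of_nonneg (le_of_lt hp_pos) (measure_ne_top μ _))
  have hGtail : ∑' j, G (j+1) = ⊤ := ENNReal.tsum_add_one_eq_top hG_sum hG0
  -- each term of the divergent series bounds the corresponding interval integral
  have hterm : ∀ k, ENNReal.ofReal (1/8) * G (k+1) ≤
      ∫⁻ t in Set.Ioc (a k) (b k),
        (∫⁻ y, (ENNReal.ofReal ‖c t - y‖) ^ ((2:ℝ) - (n:ℝ)) ∂μ) ^ p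
          * ENNReal.ofReal ‖c' t‖ := by
    intro k
    refine le_trans (le_of_eq ?_) (hIk k)
    have hscal : (1:ℝ)/8 * (q (k+1))⁻¹ = (q k) ^ (-2:ℝ) * q (k+2) := by
      have hr1 : (q k) ^ (-2:ℝ) = ((q k)^(2:ℕ))⁻¹ := by
        rw [Real.rpow_neg (le_of_lt (hq_pos k)), ← Real.rpow_natCast (q k) 2]
        norm_num
      have hr2 : q (k+2) = q k / 4 := by rw [hq_succ (k+1), hq_succ k]; ring
      have hr3 : q (k+1) = q k / 2 := hq_succ k
      have hne := (hq_pos k).ne'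
      rw [hr1, hr2, hr3]
      field_simp
      ring
    rw [hG_def, ← mul_assoc, ← ENNReal.ofReal_mul (by norm_num : (0:ℝ) ≤ 1/8), hscal]
  -- put everything together
  rw [← top_le_iff]
  have h18 : ENNReal.ofReal (1/8) ≠ 0 := (ENNReal.ofReal_pos.2 (by norm_num)).ne'
  calc (⊤:ℝ≥0∞) = ∑' k, ENNReal.ofReal (1/8) * G (k+1) := by
        rw [ENNReal.tsum_mul_left, hGtail]
        exact (ENNReal.mul_top h18).symm
    _ ≤ ∑' k, ∫⁻ t in Set.Ioc (a k) (b k),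
          (∫⁻ y, (ENNReal.ofReal ‖c t - y‖) ^ ((2:ℝ) - (n:ℝ)) ∂μ) ^ p
            * ENNReal.ofReal ‖c' t‖ := ENNReal.tsum_le_tsum hterm
    _ = ∫⁻ t in ⋃ k, Set.Ioc (a k) (b k),
          (∫⁻ y, (ENNReal.ofReal ‖c t - y‖) ^ ((2:ℝ) - (n:ℝ)) ∂μ) ^ p
            * ENNReal.ofReal ‖c' t‖ :=
        (lintegral_iUnion (fun k => measurableSet_Ioc) hdisj _).symm
    _ ≤ ∫⁻ t in S,
          (∫⁻ y, (ENNReal.ofReal ‖c t - y‖) ^ ((2:ℝ) - (n:ℝ)) ∂μ) ^ p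
            * ENNReal.ofReal ‖c' t‖ :=
        lintegral_mono_set (Set.iUnion_subset fun k t ht =>
          hS_seg _ (hb_mem_S k) ⟨le_trans (ha_nonneg k) (le_of_lt ht.1), ht.2⟩)
end

section
/- There exists a constant C > 0 such that for every finite Borel measure μ on ℝ³ and every bounded measurable set A ⊂ ℝ³, one has ∫_A ( ∫_{ℝ³} |x-y|^{-1} dμ(y) )² dx ≤ C · vol(A)^{1/3} · μ(ℝ³)², where vol denotes Lebesgue measure on ℝ³. -/
open MeasureTheory ENNReal Metric

-- Cauchy-Schwarz
lemma cs {α : Type*} [MeasurableSpace α] (μ : Measure α) (f : α → ℝ≥0∞)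
    (hf : AEMeasurable f μ) :
    (∫⁻ a, f a ∂μ) ^ 2 ≤ μ Set.univ * ∫⁻ a, f a ^ 2 ∂μ := by
  have hpq : (2:ℝ).HolderConjugate 2 := by constructor <;> norm_num
  have h := ENNReal.lintegral_mul_le_Lp_mul_Lq μ hpq hf aemeasurable_const (g := fun _ => 1)
  simp only [mul_one, one_rpow, lintegral_const, Pi.mul_apply] at h
  calc (∫⁻ a, f a ∂μ) ^ 2 ≤ ((∫⁻ a, f a ^ (2:ℝ) ∂μ) ^ (1/(2:ℝ)) * (μ Set.univ) ^ (1/(2:ℝ))) ^ 2 := by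
        gcongr
        simpa using h
    _ = μ Set.univ * ∫⁻ a, f a ^ 2 ∂μ := by
        rw [mul_pow, ← ENNReal.rpow_natCast ((∫⁻ a, f a ^ (2:ℝ) ∂μ) ^ (1/(2:ℝ))),
          ← ENNReal.rpow_natCast ((μ Set.univ) ^ (1/(2:ℝ))), ← ENNReal.rpow_mul, ← ENNReal.rpow_mul]
        norm_num
        exact mul_comm _ _

noncomputable abbrev E3 := EuclideanSpace ℝ (Fin 3)

lemma finrank_E3 : Module.finrank ℝ E3 = 3 := by simp [finrank_euclideanSpace]

lemma ball_int (y : E3) {r : ℝ} (hr : 0 < r) :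
    ∫⁻ x in ball y r, ((ENNReal.ofReal ‖x - y‖)⁻¹) ^ 2
      ≤ ENNReal.ofReal (8 * r) * volume (ball (0:E3) 1) := by
  set V := volume (ball (0:E3) 1) with hV
  set S : ℕ → Set E3 := fun k => ball y (r / 2 ^ k) \ ball y (r / 2 ^ (k+1)) with hS
  have cover : ball y r ⊆ (⋃ k, S k) ∪ {y} := by
    intro x hx
    by_cases hxy : x = y
    · exact Or.inr (by simp [hxy])
    left
    have hd : 0 < dist x y := dist_pos.2 hxy
    have hex : ∃ n : ℕ, r / 2 ^ (n+1) ≤ dist x y := by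
      obtain ⟨n, hn⟩ := pow_unbounded_of_one_lt (r / dist x y) (one_lt_two (α := ℝ))
      refine ⟨n, ?_⟩
      rw [div_le_iff₀ (by positivity)]
      calc r ≤ dist x y * 2 ^ n := by rw [div_lt_iff₀ hd] at hn; linarith [hn.le]
        _ ≤ dist x y * 2 ^ (n+1) := by gcongr <;> norm_num
    refine Set.mem_iUnion.2 ⟨Nat.find hex, ?_, ?_⟩
    · rw [mem_ball]
      rcases Nat.eq_zero_or_eq_succ_pred (Nat.find hex) with h0 | hsucc
      · rw [h0]; simpa using hx
      · rw [hsucc]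
        have := Nat.find_min hex (m := Nat.find hex - 1) (by omega)
        push_neg at this
        simpa [Nat.succ_eq_add_one, Nat.sub_add_cancel (by omega : 1 ≤ Nat.find hex)] using this
    · rw [mem_ball, not_lt]
      exact Nat.find_spec hex
  calc ∫⁻ x in ball y r, ((ENNReal.ofReal ‖x - y‖)⁻¹) ^ 2
      ≤ ∫⁻ x in (⋃ k, S k) ∪ {y}, ((ENNReal.ofReal ‖x - y‖)⁻¹) ^ 2 :=
        lintegral_mono_set cover
    _ ≤ (∫⁻ x in (⋃ k, S k), ((ENNReal.ofReal ‖x - y‖)⁻¹) ^ 2)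
        + ∫⁻ x in ({y} : Set E3), ((ENNReal.ofReal ‖x - y‖)⁻¹) ^ 2 := lintegral_union_le _ _ _
    _ ≤ (∑' k, ∫⁻ x in S k, ((ENNReal.ofReal ‖x - y‖)⁻¹) ^ 2) + 0 := by
        gcongr
        · exact lintegral_iUnion_le _ _
        · rw [setLIntegral_measure_zero _ _ (measure_singleton y)]
    _ ≤ (∑' k, ENNReal.ofReal (4 * r) * (2 : ℝ≥0∞)⁻¹ ^ k * V) + 0 := by
        gcongr with k
        have hb : ∀ x ∈ S k, ((ENNReal.ofReal ‖x - y‖)⁻¹) ^ 2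
            ≤ ENNReal.ofReal (((r / 2 ^ (k+1))⁻¹) ^ 2) := by
          intro x hx
          have h1 : r / 2 ^ (k+1) ≤ ‖x - y‖ := by
            rw [← dist_eq_norm]
            simpa [mem_ball, not_lt] using hx.2
          have hp : (0:ℝ) < r / 2 ^ (k+1) := by positivity
          rw [ENNReal.ofReal_pow (by positivity), ENNReal.ofReal_inv_of_pos hp]
          gcongr
        calc ∫⁻ x in S k, ((ENNReal.ofReal ‖x - y‖)⁻¹) ^ 2
            ≤ ∫⁻ _ in S k, ENNReal.ofReal (((r / 2 ^ (k+1))⁻¹) ^ 2) :=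
              setLIntegral_mono measurable_const hb
          _ = ENNReal.ofReal (((r / 2 ^ (k+1))⁻¹) ^ 2) * volume (S k) := setLIntegral_const _ _
          _ ≤ ENNReal.ofReal (((r / 2 ^ (k+1))⁻¹) ^ 2) * volume (ball y (r / 2 ^ k)) := by
              gcongr
              exact Set.diff_subset
          _ = ENNReal.ofReal (4 * r) * (2 : ℝ≥0∞)⁻¹ ^ k * V := by
              rw [Measure.addHaar_ball _ _ (by positivity : (0:ℝ) ≤ r / 2 ^ k), finrank_E3,
                ← hV, ← mul_assoc, ← ENNReal.ofReal_mul (by positivity)]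
              have hre : ((r / 2 ^ (k+1))⁻¹) ^ 2 * (r / 2 ^ k) ^ 3 = 4 * r * (2⁻¹:ℝ) ^ k := by
                rw [inv_pow (2:ℝ) k]
                field_simp
                ring
              rw [hre, ENNReal.ofReal_mul (by positivity), ENNReal.ofReal_pow (by norm_num),
                ENNReal.ofReal_inv_of_pos two_pos, ENNReal.ofReal_ofNat]
    _ = ENNReal.ofReal (8 * r) * V := by
        rw [add_zero, ENNReal.tsum_mul_right, ENNReal.tsum_mul_left, ENNReal.tsum_geometric]
        have h2 : (1 - (2:ℝ≥0∞)⁻¹)⁻¹ = 2 := by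
          rw [ENNReal.one_sub_inv_two, inv_inv]
        rw [h2]
        congr 1
        rw [← ENNReal.ofReal_ofNat 2, ← ENNReal.ofReal_mul (by positivity)]
        norm_num
        ring_nf
        rw [ENNReal.ofReal_mul hr.le, ENNReal.ofReal_ofNat]

lemma set_bound (A : Set E3) (hAb : Bornology.IsBounded A) (y : E3) :
    ∫⁻ x in A, ((ENNReal.ofReal ‖x - y‖)⁻¹) ^ 2
      ≤ (8 * volume (ball (0:E3) 1) + 1) * (volume A) ^ ((1:ℝ)/3) := by
  have hAfin : volume A ≠ ⊤ := hAb.measure_lt_top.ne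
  set a := (volume A).toReal with ha
  have ha0 : 0 ≤ a := ENNReal.toReal_nonneg
  rcases eq_or_lt_of_le ha0 with h0 | hapos
  · have hA0 : volume A = 0 := by
      rcases ENNReal.toReal_eq_zero_iff _ |>.1 h0.symm with h | h
      · exact h
      · exact absurd h hAfin
    rw [Measure.restrict_eq_zero.2 hA0, lintegral_zero_measure]
    exact zero_le
  set r := a ^ ((1:ℝ)/3) with hrdef
  have hrpos : 0 < r := Real.rpow_pos_of_pos hapos _
  have hsplit : A ⊆ ball y r ∪ (A \ ball y r) := by
    intro x hx
    by_cases h : x ∈ ball y r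
    · exact Or.inl h
    · exact Or.inr ⟨hx, h⟩
  have key2 : ∫⁻ x in A \ ball y r, ((ENNReal.ofReal ‖x - y‖)⁻¹) ^ 2
      ≤ ENNReal.ofReal r := by
    have hb : ∀ x ∈ A \ ball y r, ((ENNReal.ofReal ‖x - y‖)⁻¹) ^ 2
        ≤ ENNReal.ofReal ((r⁻¹) ^ 2) := by
      intro x hx
      have h1 : r ≤ ‖x - y‖ := by
        rw [← dist_eq_norm]
        simpa [mem_ball, not_lt] using hx.2
      rw [ENNReal.ofReal_pow (by positivity), ENNReal.ofReal_inv_of_pos hrpos]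
      gcongr
    calc ∫⁻ x in A \ ball y r, ((ENNReal.ofReal ‖x - y‖)⁻¹) ^ 2
        ≤ ∫⁻ _ in A \ ball y r, ENNReal.ofReal ((r⁻¹) ^ 2) :=
          setLIntegral_mono measurable_const hb
      _ = ENNReal.ofReal ((r⁻¹) ^ 2) * volume (A \ ball y r) := setLIntegral_const _ _
      _ ≤ ENNReal.ofReal ((r⁻¹) ^ 2) * volume A := by gcongr; exact Set.diff_subset
      _ = ENNReal.ofReal r := by
          rw [← ENNReal.ofReal_toReal hAfin, ← ha, ← ENNReal.ofReal_mul (by positivity)]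
          congr 1
          have h3 : r ^ (3:ℕ) = a := by
            rw [hrdef, ← Real.rpow_natCast _ 3, ← Real.rpow_mul ha0]
            norm_num
          rw [← h3]
          field_simp
  have hofr : ENNReal.ofReal r = (volume A) ^ ((1:ℝ)/3) := by
    rw [← ENNReal.ofReal_toReal hAfin, ← ha, ENNReal.ofReal_rpow_of_pos hapos]
  calc ∫⁻ x in A, ((ENNReal.ofReal ‖x - y‖)⁻¹) ^ 2
      ≤ ∫⁻ x in ball y r ∪ (A \ ball y r), ((ENNReal.ofReal ‖x - y‖)⁻¹) ^ 2 :=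
        lintegral_mono_set hsplit
    _ ≤ (∫⁻ x in ball y r, ((ENNReal.ofReal ‖x - y‖)⁻¹) ^ 2)
        + ∫⁻ x in A \ ball y r, ((ENNReal.ofReal ‖x - y‖)⁻¹) ^ 2 := lintegral_union_le _ _ _
    _ ≤ ENNReal.ofReal (8 * r) * volume (ball (0:E3) 1) + ENNReal.ofReal r :=
        add_le_add (ball_int y hrpos) key2
    _ = (8 * volume (ball (0:E3) 1) + 1) * (volume A) ^ ((1:ℝ)/3) := by
        rw [← hofr, ENNReal.ofReal_mul (by norm_num), ENNReal.ofReal_ofNat]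
        ring

/-- There is a constant `C > 0` such that for every finite Borel measure `μ` on `ℝ³`
and every bounded measurable `A ⊆ ℝ³`,
`∫_A ( ∫ |x-y|⁻¹ dμ(y) )² dx ≤ C vol(A)^{1/3} μ(ℝ³)²`. -/
theorem stmt9 :
    ∃ C : ℝ, 0 < C ∧
      ∀ μ : Measure (EuclideanSpace ℝ (Fin 3)), IsFiniteMeasure μ →
        ∀ A : Set (EuclideanSpace ℝ (Fin 3)), MeasurableSet A → Bornology.IsBounded A →
          (∫⁻ x in A, (∫⁻ y, (ENNReal.ofReal ‖x - y‖)⁻¹ ∂μ) ^ 2)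
            ≤ ENNReal.ofReal C * (volume A) ^ ((1:ℝ)/3) * (μ Set.univ) ^ 2 := by
  set V := volume (ball (0:E3) 1) with hV
  have hVfin : V ≠ ⊤ := measure_ball_lt_top.ne
  set K : ℝ≥0∞ := 8 * V + 1 with hK
  have hKfin : K ≠ ⊤ := by
    rw [hK]
    exact (ENNReal.add_lt_top.2 ⟨ENNReal.mul_lt_top (by norm_num) hVfin.lt_top, one_lt_top⟩).ne
  refine ⟨K.toReal, ?_, ?_⟩
  · have : (1:ℝ≥0∞) ≤ K := by rw [hK]; exact le_add_self
    have := ENNReal.toReal_mono hKfin this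
    simpa using lt_of_lt_of_le one_pos this
  intro μ hμ A hA hAb
  have hofK : ENNReal.ofReal K.toReal = K := ENNReal.ofReal_toReal hKfin
  have hmeas : Measurable (Function.uncurry fun x y : E3 =>
      ((ENNReal.ofReal ‖x - y‖)⁻¹) ^ 2) := by
    apply Measurable.pow_const
    apply Measurable.inv
    exact (measurable_fst.sub measurable_snd).norm.ennreal_ofReal
  calc (∫⁻ x in A, (∫⁻ y, (ENNReal.ofReal ‖x - y‖)⁻¹ ∂μ) ^ 2)
      ≤ ∫⁻ x in A, μ Set.univ * ∫⁻ y, ((ENNReal.ofReal ‖x - y‖)⁻¹) ^ 2 ∂μ := by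
        refine lintegral_mono fun x => ?_
        refine cs μ _ ?_
        exact ((measurable_const.sub measurable_id).norm.ennreal_ofReal.inv).aemeasurable
    _ = μ Set.univ * ∫⁻ x in A, ∫⁻ y, ((ENNReal.ofReal ‖x - y‖)⁻¹) ^ 2 ∂μ :=
        lintegral_const_mul' _ _ (measure_ne_top μ _)
    _ = μ Set.univ * ∫⁻ y, (∫⁻ x in A, ((ENNReal.ofReal ‖x - y‖)⁻¹) ^ 2 ∂volume) ∂μ := by
        rw [lintegral_lintegral_swap hmeas.aemeasurable]
    _ ≤ μ Set.univ * ∫⁻ _, K * (volume A) ^ ((1:ℝ)/3) ∂μ := by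
        gcongr with y
        exact set_bound A hAb y
    _ = K * (volume A) ^ ((1:ℝ)/3) * (μ Set.univ) ^ 2 := by
        rw [lintegral_const]
        ring
    _ = ENNReal.ofReal K.toReal * (volume A) ^ ((1:ℝ)/3) * (μ Set.univ) ^ 2 := by rw [hofK]
end

section
/- Let n ≥ 5. There exists a constant C = C(n) > 0 such that for every finite Borel measure μ on ℝ^n and every integer m ≥ 2, writing ρ_j = 2^{-j}, D_m = B(0,ρ_m) \ B(0,ρ_{m+1}) and D̃_m = B(0,ρ_{m-2}) \ B(0,ρ_{m+2}), one has ∫_{D_m} ( ∫_{D̃_m} |x-y|^{2-n} dμ(y) )^{2/(n-2)} dx ≤ C · μ(B(0,ρ_{m-2}))^{2/(n-2)} · ρ_m^{n-2}. -/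
open MeasureTheory ENNReal Metric

lemma my_rpow_anti {x y : ℝ≥0∞} (hxy : x ≤ y) {z : ℝ} (hz : z ≤ 0) :
    y ^ z ≤ x ^ z := by
  have h1 : y ^ z = (y ^ (-z))⁻¹ := by rw [← ENNReal.rpow_neg, neg_neg]
  have h2 : x ^ z = (x ^ (-z))⁻¹ := by rw [← ENNReal.rpow_neg, neg_neg]
  rw [h1, h2]
  exact ENNReal.inv_le_inv.mpr (ENNReal.rpow_le_rpow hxy (neg_nonneg.mpr hz))

lemma my_real_ineq (n : ℕ) (hn : 5 ≤ n) {R : ℝ} (hR : 0 < R) (k : ℕ) :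
    (R * 2⁻¹ ^ (k+1)) ^ ((2:ℝ) - n) * (R * 2⁻¹ ^ k) ^ n ≤ R^2 * 2^n * (2⁻¹)^k := by
  obtain ⟨d, rfl⟩ : ∃ d : ℕ, n = d + 2 := ⟨n - 2, by omega⟩
  have ha : (0:ℝ) < R * 2⁻¹ ^ (k+1) := by positivity
  have hcast : ((2:ℝ) - ((d+2:ℕ):ℝ)) = -((d:ℕ):ℝ) := by push_cast; ring
  rw [hcast, Real.rpow_neg ha.le, Real.rpow_natCast]
  have hb : R * 2⁻¹ ^ k = 2 * (R * 2⁻¹ ^ (k+1)) := by rw [pow_succ]; ring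
  rw [hb]
  have key : ∀ a : ℝ, 0 < a → ((a:ℝ) ^ d)⁻¹ * (2*a)^(d+2) = 2^(d+2) * a^2 := by
    intro a ha
    have han : a ^ (d+2) = a ^ d * a ^ 2 := by rw [← pow_add]
    rw [mul_pow, han]
    field_simp
  rw [key _ ha]
  have h2 : ((2:ℝ)⁻¹^(k+1))^2 ≤ (2:ℝ)⁻¹^k := by
    rw [← pow_mul]
    exact pow_le_pow_of_le_one (by norm_num) (by norm_num) (by omega)
  calc 2^(d+2) * (R * 2⁻¹ ^ (k+1))^2 = R^2 * 2^(d+2) * ((2:ℝ)⁻¹^(k+1))^2 := by ring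
    _ ≤ R^2 * 2^(d+2) * (2:ℝ)⁻¹^k := by gcongr

lemma my_ball_bound (n : ℕ) (hn : 5 ≤ n) (y : EuclideanSpace ℝ (Fin n)) {R : ℝ} (hR : 0 < R) :
    ∫⁻ x in ball y R, (ENNReal.ofReal ‖x - y‖) ^ ((2:ℝ) - (n:ℝ)) ∂volume
      ≤ volume (ball (0 : EuclideanSpace ℝ (Fin n)) 1) * ENNReal.ofReal (2^(n+1) * R^2) := by
  haveI : Nontrivial (EuclideanSpace ℝ (Fin n)) := by
    refine ⟨EuclideanSpace.single (⟨0, by omega⟩ : Fin n) (1:ℝ), 0, fun h => ?_⟩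
    have := congrArg norm h
    rw [EuclideanSpace.norm_single, norm_zero] at this
    norm_num at this
  set v := volume (ball (0 : EuclideanSpace ℝ (Fin n)) 1) with hv
  set f : EuclideanSpace ℝ (Fin n) → ℝ≥0∞ := fun x => (ENNReal.ofReal ‖x - y‖) ^ ((2:ℝ) - (n:ℝ)) with hf
  set A : ℕ → Set (EuclideanSpace ℝ (Fin n)) := fun k => ball y (R * 2⁻¹ ^ k) \ ball y (R * 2⁻¹ ^ (k+1)) with hA
  have hz : ((2:ℝ) - n) ≤ 0 := by
    have : (5:ℝ) ≤ n := by exact_mod_cast hn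
    linarith
  -- covering
  have cover : ball y R ⊆ {y} ∪ ⋃ k : ℕ, A k := by
    intro x hx
    rcases eq_or_ne x y with rfl | hxy
    · exact Or.inl rfl
    · right
      have hd0 : 0 < dist x y := dist_pos.mpr hxy
      have hdR : dist x y < R := mem_ball.mp hx
      have hex : ∃ k : ℕ, R * 2⁻¹ ^ (k+1) ≤ dist x y := by
        obtain ⟨K, hK⟩ := exists_pow_lt_of_lt_one (div_pos hd0 hR) (by norm_num : (2:ℝ)⁻¹ < 1)
        refine ⟨K, ?_⟩
        have h1 : (2:ℝ)⁻¹ ^ (K+1) ≤ 2⁻¹ ^ K := by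
          apply pow_le_pow_of_le_one (by norm_num) (by norm_num) (by omega)
        have := (lt_div_iff₀ hR).mp hK
        nlinarith
      have h1 : R * 2⁻¹ ^ (Nat.find hex + 1) ≤ dist x y := Nat.find_spec hex
      have h2 : dist x y < R * 2⁻¹ ^ (Nat.find hex) := by
        cases hfind : Nat.find hex with
        | zero => rw [pow_zero]; simpa using hdR
        | succ j =>
          have hj : j < Nat.find hex := by omega
          have := Nat.find_min hex hj
          push_neg at this
          exact this
      exact Set.mem_iUnion.mpr ⟨Nat.find hex,
        ⟨mem_ball.mpr h2, fun hc => absurd (mem_ball.mp hc) (not_lt.mpr h1)⟩⟩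
  have hy0 : ∫⁻ x in ({y} : Set (EuclideanSpace ℝ (Fin n))), f x ∂volume = 0 := by
    rw [Measure.restrict_eq_zero.mpr (measure_singleton y), lintegral_zero_measure]
  -- per annulus bound
  have hann : ∀ k : ℕ, ∫⁻ x in A k, f x ∂volume
      ≤ ENNReal.ofReal (R^2 * 2^n) * (ENNReal.ofReal 2⁻¹)^k * v := by
    intro k
    have hpos1 : (0:ℝ) < R * 2⁻¹ ^ (k+1) := by positivity
    have step1 : ∫⁻ x in A k, f x ∂volume
        ≤ ∫⁻ _x in A k, (ENNReal.ofReal (R * 2⁻¹ ^ (k+1))) ^ ((2:ℝ) - (n:ℝ)) ∂volume := by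
      apply setLIntegral_mono' (measurableSet_ball.diff measurableSet_ball)
      intro x hx
      apply my_rpow_anti _ hz
      apply ENNReal.ofReal_le_ofReal
      have : ¬ dist x y < R * 2⁻¹ ^ (k+1) := fun hc => hx.2 (mem_ball.mpr hc)
      rw [← dist_eq_norm]
      linarith [not_lt.mp this]
    rw [setLIntegral_const] at step1
    have step2 : volume (A k) ≤ ENNReal.ofReal ((R * 2⁻¹ ^ k)^n) * v := by
      calc volume (A k) ≤ volume (ball y (R * 2⁻¹ ^ k)) := measure_mono Set.diff_subset
        _ = ENNReal.ofReal ((R * 2⁻¹ ^ k)^(Module.finrank ℝ (EuclideanSpace ℝ (Fin n)))) * v := by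
            rw [Measure.addHaar_ball volume y (by positivity : (0:ℝ) ≤ R * 2⁻¹ ^ k)]
        _ = ENNReal.ofReal ((R * 2⁻¹ ^ k)^n) * v := by rw [finrank_euclideanSpace_fin]
    have step3 : (ENNReal.ofReal (R * 2⁻¹ ^ (k+1))) ^ ((2:ℝ) - (n:ℝ))
        = ENNReal.ofReal ((R * 2⁻¹ ^ (k+1)) ^ ((2:ℝ) - (n:ℝ))) :=
      ENNReal.ofReal_rpow_of_pos hpos1
    calc ∫⁻ x in A k, f x ∂volume
        ≤ (ENNReal.ofReal (R * 2⁻¹ ^ (k+1))) ^ ((2:ℝ) - (n:ℝ)) * volume (A k) := step1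
      _ ≤ ENNReal.ofReal ((R * 2⁻¹ ^ (k+1)) ^ ((2:ℝ) - (n:ℝ)))
            * (ENNReal.ofReal ((R * 2⁻¹ ^ k)^n) * v) := by
          rw [step3]; exact mul_le_mul_right step2 _
      _ = ENNReal.ofReal ((R * 2⁻¹ ^ (k+1)) ^ ((2:ℝ) - (n:ℝ)) * (R * 2⁻¹ ^ k)^n) * v := by
          rw [ENNReal.ofReal_mul (Real.rpow_nonneg hpos1.le _), mul_assoc]
      _ ≤ ENNReal.ofReal (R^2 * 2^n * (2⁻¹)^k) * v := by
          apply mul_le_mul_left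
          exact ENNReal.ofReal_le_ofReal (my_real_ineq n hn hR k)
      _ = ENNReal.ofReal (R^2 * 2^n) * (ENNReal.ofReal 2⁻¹)^k * v := by
          rw [← ENNReal.ofReal_pow (by norm_num), ← ENNReal.ofReal_mul (by positivity)]
  -- sum up
  have hgeom : ∑' k : ℕ, (ENNReal.ofReal 2⁻¹)^k = 2 := by
    have : (ENNReal.ofReal 2⁻¹) = 2⁻¹ := by
      rw [ENNReal.ofReal_inv_of_pos (by norm_num)]
      norm_num
    rw [this, ENNReal.tsum_geometric]
    rw [ENNReal.one_sub_inv_two]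
    simp
  calc ∫⁻ x in ball y R, f x ∂volume
      ≤ ∫⁻ x in ({y} ∪ ⋃ k : ℕ, A k : Set (EuclideanSpace ℝ (Fin n))), f x ∂volume := lintegral_mono_set cover
    _ ≤ (∫⁻ x in ({y} : Set (EuclideanSpace ℝ (Fin n))), f x ∂volume) + ∫⁻ x in (⋃ k : ℕ, A k), f x ∂volume :=
        lintegral_union_le _ _ _
    _ ≤ 0 + ∑' k : ℕ, ∫⁻ x in A k, f x ∂volume := by
        rw [hy0]; exact add_le_add le_rfl (lintegral_iUnion_le _ _)
    _ ≤ ∑' k : ℕ, ENNReal.ofReal (R^2 * 2^n) * (ENNReal.ofReal 2⁻¹)^k * v := by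
        rw [zero_add]; exact ENNReal.tsum_le_tsum hann
    _ = ENNReal.ofReal (R^2 * 2^n) * 2 * v := by
        rw [ENNReal.tsum_mul_right, ENNReal.tsum_mul_left, hgeom]
    _ = v * (ENNReal.ofReal (R^2 * 2^n) * 2) := by ring
    _ = v * ENNReal.ofReal (2^(n+1) * R^2) := by
        rw [← ENNReal.ofReal_ofNat 2, ← ENNReal.ofReal_mul (by positivity)]
        congr 1
        ring

/-- Let `n ≥ 5`. There is `C = C(n) > 0` such that for every finite Borel measure `μ`
on `ℝⁿ` and every integer `m ≥ 2`, with `ρ_j = 2^{-j}`,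
`D_m = B(0,ρ_m) \ B(0,ρ_{m+1})` and `D̃_m = B(0,ρ_{m-2}) \ B(0,ρ_{m+2})`, one has
`∫_{D_m} ( ∫_{D̃_m} |x-y|^{2-n} dμ(y) )^{2/(n-2)} dx
   ≤ C μ(B(0,ρ_{m-2}))^{2/(n-2)} ρ_m^{n-2}`. -/
theorem stmt11 (n : ℕ) (hn : 5 ≤ n) :
    ∃ C : ℝ, 0 < C ∧
      ∀ μ : Measure (EuclideanSpace ℝ (Fin n)), IsFiniteMeasure μ →
        ∀ m : ℕ, 2 ≤ m →
          (∫⁻ x in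
              Metric.ball (0 : EuclideanSpace ℝ (Fin n)) ((2:ℝ)⁻¹ ^ m) \
                Metric.ball (0 : EuclideanSpace ℝ (Fin n)) ((2:ℝ)⁻¹ ^ (m + 1)),
            (∫⁻ y in
                Metric.ball (0 : EuclideanSpace ℝ (Fin n)) ((2:ℝ)⁻¹ ^ (m - 2)) \
                  Metric.ball (0 : EuclideanSpace ℝ (Fin n)) ((2:ℝ)⁻¹ ^ (m + 2)),
              (ENNReal.ofReal ‖x - y‖) ^ ((2:ℝ) - (n:ℝ)) ∂μ) ^ ((2:ℝ) / ((n:ℝ) - 2)))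
          ≤ ENNReal.ofReal C
              * (μ (Metric.ball (0 : EuclideanSpace ℝ (Fin n)) ((2:ℝ)⁻¹ ^ (m - 2))))
                  ^ ((2:ℝ) / ((n:ℝ) - 2))
              * ENNReal.ofReal (((2:ℝ)⁻¹ ^ m) ^ (n - 2)) := by
  haveI : Nontrivial (EuclideanSpace ℝ (Fin n)) := by
    refine ⟨EuclideanSpace.single (⟨0, by omega⟩ : Fin n) (1:ℝ), 0, fun h => ?_⟩
    have := congrArg norm h
    rw [EuclideanSpace.norm_single, norm_zero] at this
    norm_num at this
  have hn' : (5:ℝ) ≤ n := by exact_mod_cast hn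
  have hne2 : ((n:ℝ) - 2) ≠ 0 := by linarith
  have hne2' : (-2 + (n:ℝ)) ≠ 0 := by linarith
  have hne4 : ((n:ℝ) - 4) ≠ 0 := by linarith
  set v := volume (ball (0 : EuclideanSpace ℝ (Fin n)) 1) with hv
  have hv0 : v ≠ 0 := (measure_ball_pos volume 0 one_pos).ne'
  have hvtop : v ≠ ⊤ := measure_ball_lt_top.ne
  set p : ℝ := 2 / ((n:ℝ) - 2) with hp_def
  have hp0 : 0 < p := div_pos (by norm_num) (by linarith)
  have hp1 : p < 1 := by
    rw [hp_def, div_lt_one (by linarith)]; linarith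
  set K : ℝ≥0∞ := (v * ENNReal.ofReal (2^(n+1) * 25)) ^ p * v ^ (1 - p) with hK_def
  have hKtop : K ≠ ⊤ := by
    apply ENNReal.mul_ne_top
    · exact ENNReal.rpow_ne_top_of_nonneg hp0.le (ENNReal.mul_ne_top hvtop ofReal_ne_top)
    · exact ENNReal.rpow_ne_top_of_nonneg (by linarith) hvtop
  refine ⟨K.toReal + 1, by positivity, ?_⟩
  intro μ hμ m hm
  set ρ : ℝ := (2:ℝ)⁻¹ ^ m with hρ_def
  have hρ0 : 0 < ρ := by positivity
  set S : Set (EuclideanSpace ℝ (Fin n)) :=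
    ball (0 : EuclideanSpace ℝ (Fin n)) ((2:ℝ)⁻¹ ^ m) \ ball 0 ((2:ℝ)⁻¹ ^ (m + 1)) with hS_def
  set T : Set (EuclideanSpace ℝ (Fin n)) :=
    ball (0 : EuclideanSpace ℝ (Fin n)) ((2:ℝ)⁻¹ ^ (m - 2)) \ ball 0 ((2:ℝ)⁻¹ ^ (m + 2)) with hT_def
  have hrad : (2:ℝ)⁻¹ ^ (m - 2) = 4 * ρ := by
    have h4 : m - 2 + 2 = m := by omega
    have h5 : (2⁻¹:ℝ)^m = 2⁻¹^(m-2) * 2⁻¹^2 := by rw [← pow_add, h4]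
    rw [hρ_def, h5]
    ring
  -- measurability
  have hF : Measurable (fun q : EuclideanSpace ℝ (Fin n) × EuclideanSpace ℝ (Fin n) =>
      (ENNReal.ofReal ‖q.1 - q.2‖) ^ ((2:ℝ) - (n:ℝ))) := by
    apply Measurable.pow_const
    exact ENNReal.measurable_ofReal.comp (measurable_fst.sub measurable_snd).norm
  set g : EuclideanSpace ℝ (Fin n) → ℝ≥0∞ :=
    fun x => ∫⁻ y in T, (ENNReal.ofReal ‖x - y‖) ^ ((2:ℝ) - (n:ℝ)) ∂μ with hg_def
  have hgmeas : Measurable g := by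
    have huncurry : Measurable (Function.uncurry (fun x y : EuclideanSpace ℝ (Fin n) =>
        (ENNReal.ofReal ‖x - y‖) ^ ((2:ℝ) - (n:ℝ)))) := hF
    exact Measurable.lintegral_prod_right (ν := μ.restrict T) huncurry
  -- step 1 : Hölder
  have holder : (∫⁻ x in S, (g x) ^ p ∂volume)
      ≤ (∫⁻ x in S, g x ∂volume) ^ p * (volume S) ^ (1 - p) := by
    have hab : Real.HolderConjugate (((n:ℝ) - 2)/2) (((n:ℝ) - 2)/((n:ℝ) - 4)) := by
      rw [Real.holderConjugate_iff]
      constructor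
      · rw [lt_div_iff₀ (by norm_num)]; linarith
      · rw [inv_div, inv_div, ← add_div, div_eq_one_iff_eq hne2]
        ring
    have H := ENNReal.lintegral_mul_le_Lp_mul_Lq (volume.restrict S) hab
      (f := fun x => (g x) ^ p) (g := fun _ => 1)
      ((hgmeas.pow_const _).aemeasurable) aemeasurable_const
    simp only [Pi.mul_apply, mul_one, ENNReal.one_rpow] at H
    have e1 : ∀ x, ((g x) ^ p) ^ (((n:ℝ) - 2)/2) = g x := by
      intro x
      rw [← ENNReal.rpow_mul]
      rw [show p * (((n:ℝ) - 2)/2) = 1 by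
        rw [hp_def, div_mul_div_comm, div_eq_one_iff_eq (by positivity), mul_comm]]
      exact ENNReal.rpow_one _
    simp only [e1] at H
    rw [lintegral_one, Measure.restrict_apply_univ] at H
    have e2 : 1 / (((n:ℝ) - 2)/2) = p := by rw [hp_def, one_div_div]
    have e3 : 1 / (((n:ℝ) - 2)/((n:ℝ) - 4)) = 1 - p := by
      rw [hp_def, one_div_div]
      field_simp
      ring
    rw [e2, e3] at H
    exact H
  -- step 2 : bound on the double integral
  have swap : ∫⁻ x in S, g x ∂volume
      = ∫⁻ y in T, ∫⁻ x in S, (ENNReal.ofReal ‖x - y‖) ^ ((2:ℝ) - (n:ℝ)) ∂volume ∂μ := by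
    exact lintegral_lintegral_swap (hF.aemeasurable)
  have inner_bound : ∀ y ∈ T,
      ∫⁻ x in S, (ENNReal.ofReal ‖x - y‖) ^ ((2:ℝ) - (n:ℝ)) ∂volume
        ≤ v * ENNReal.ofReal (2^(n+1) * (5*ρ)^2) := by
    intro y hy
    have hsub : S ⊆ ball y (5*ρ) := by
      intro x hx
      have hx1 : ‖x‖ < ρ := by simpa [hρ_def] using mem_ball_zero_iff.mp hx.1
      have hy1 : ‖y‖ < 4*ρ := by
        have := mem_ball_zero_iff.mp hy.1
        rwa [hrad] at this
      rw [mem_ball, dist_eq_norm]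
      calc ‖x - y‖ ≤ ‖x‖ + ‖y‖ := norm_sub_le _ _
        _ < 5*ρ := by linarith
    calc ∫⁻ x in S, (ENNReal.ofReal ‖x - y‖) ^ ((2:ℝ) - (n:ℝ)) ∂volume
        ≤ ∫⁻ x in ball y (5*ρ), (ENNReal.ofReal ‖x - y‖) ^ ((2:ℝ) - (n:ℝ)) ∂volume :=
          lintegral_mono_set hsub
      _ ≤ v * ENNReal.ofReal (2^(n+1) * (5*ρ)^2) := my_ball_bound n hn y (by positivity)
  have double_bound : ∫⁻ x in S, g x ∂volume
      ≤ v * ENNReal.ofReal (2^(n+1) * 25) * ENNReal.ofReal (ρ^2)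
          * μ (ball (0 : EuclideanSpace ℝ (Fin n)) ((2:ℝ)⁻¹ ^ (m - 2))) := by
    rw [swap]
    have h1 : ∫⁻ y in T, ∫⁻ x in S, (ENNReal.ofReal ‖x - y‖) ^ ((2:ℝ) - (n:ℝ)) ∂volume ∂μ
        ≤ ∫⁻ _y in T, v * ENNReal.ofReal (2^(n+1) * (5*ρ)^2) ∂μ := by
      apply setLIntegral_mono' (measurableSet_ball.diff measurableSet_ball)
      exact inner_bound
    rw [setLIntegral_const] at h1
    refine h1.trans ?_
    have e : v * ENNReal.ofReal (2^(n+1) * (5*ρ)^2)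
        = v * ENNReal.ofReal (2^(n+1) * 25) * ENNReal.ofReal (ρ^2) := by
      rw [mul_assoc, ← ENNReal.ofReal_mul (by positivity)]
      congr 2
      ring
    rw [e]
    exact mul_le_mul_right (measure_mono Set.diff_subset) _
  -- step 3 : volume of S
  have volS : volume S ≤ ENNReal.ofReal (ρ^n) * v := by
    calc volume S ≤ volume (ball (0 : EuclideanSpace ℝ (Fin n)) ρ) :=
          measure_mono (Set.diff_subset.trans (by rw [hρ_def]))
      _ = ENNReal.ofReal (ρ^(Module.finrank ℝ (EuclideanSpace ℝ (Fin n)))) * v := by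
          rw [Measure.addHaar_ball volume _ hρ0.le]
      _ = ENNReal.ofReal (ρ^n) * v := by rw [finrank_euclideanSpace_fin]
  -- combine
  set B := μ (ball (0 : EuclideanSpace ℝ (Fin n)) ((2:ℝ)⁻¹ ^ (m - 2))) with hB
  have main : (∫⁻ x in S, (g x) ^ p ∂volume)
      ≤ K * B ^ p * ENNReal.ofReal (ρ ^ (n - 2)) := by
    calc (∫⁻ x in S, (g x) ^ p ∂volume)
        ≤ (∫⁻ x in S, g x ∂volume) ^ p * (volume S) ^ (1 - p) := holder
      _ ≤ (v * ENNReal.ofReal (2^(n+1) * 25) * ENNReal.ofReal (ρ^2) * B) ^ p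
            * (ENNReal.ofReal (ρ^n) * v) ^ (1 - p) := by
          exact mul_le_mul' (ENNReal.rpow_le_rpow double_bound hp0.le)
            (ENNReal.rpow_le_rpow volS (by linarith))
      _ = (v * ENNReal.ofReal (2^(n+1) * 25)) ^ p * (ENNReal.ofReal (ρ^2)) ^ p * B ^ p
            * ((ENNReal.ofReal (ρ^n)) ^ (1-p) * v ^ (1 - p)) := by
          rw [ENNReal.mul_rpow_of_nonneg _ _ hp0.le, ENNReal.mul_rpow_of_nonneg _ _ hp0.le,
            ENNReal.mul_rpow_of_nonneg _ _ (by linarith : (0:ℝ) ≤ 1 - p)]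
      _ = K * B ^ p * ((ENNReal.ofReal (ρ^2)) ^ p * (ENNReal.ofReal (ρ^n)) ^ (1-p)) := by
          rw [hK_def]; ring
      _ = K * B ^ p * ENNReal.ofReal (ρ ^ (n - 2)) := by
          congr 1
          rw [ENNReal.ofReal_rpow_of_pos (by positivity), ENNReal.ofReal_rpow_of_pos (by positivity),
            ← ENNReal.ofReal_mul (by positivity)]
          congr 1
          rw [← Real.rpow_natCast ρ 2, ← Real.rpow_natCast ρ n,
            ← Real.rpow_mul hρ0.le, ← Real.rpow_mul hρ0.le, ← Real.rpow_add hρ0]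
          rw [show ((2:ℕ):ℝ) * p + (n:ℝ) * (1 - p) = ((n - 2 : ℕ) : ℝ) by
            rw [Nat.cast_sub (by omega), hp_def]; push_cast; field_simp; ring]
          exact Real.rpow_natCast ρ (n - 2)
  refine main.trans ?_
  have hKC : K ≤ ENNReal.ofReal (K.toReal + 1) := by
    conv_lhs => rw [← ENNReal.ofReal_toReal hKtop]
    exact ENNReal.ofReal_le_ofReal (by linarith)
  exact mul_le_mul' (mul_le_mul' hKC le_rfl) le_rfl
end
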